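/- Let λ > 0, let (x_j : j ∈ ℤ) be a Riesz-basis sequence, let f ∈ PW_π, and let (a(j,λ)) be the coefficients of the Gaussian interpolant I_λ(f). Let ψ_λ be the restriction to [-π,π] of the function Ψ_λ(u) := ∑_{j∈ℤ} a(j,λ) e^{-i x_j u}. Then ‖ψ_λ‖_{L²[-π,π]} ≤ √(λ/π) · e^{π²/(4λ)} · ‖F[f]‖_{L²[-π,π]}. -/

import Mathlib

noncomputable section

open MeasureTheory Filter Complex

/-- The interval `[-π, π]`. -/
def Iππ : Set ℝ := Set.Icc (-Real.pi) Real.pi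

/-- Lebesgue measure restricted to `[-π, π]`. -/
def μπ : Measure ℝ := volume.restrict Iππ

/-- The exponential `e_j(t) = e^{-i x_j t}`. -/
def rbFun (x : ℤ → ℝ) (j : ℤ) (t : ℝ) : ℂ := Complex.exp (-(Complex.I * (x j) * t))

/-- Square-summability of a complex sequence. -/
def SqSummable (a : ℤ → ℂ) : Prop := Summable fun j => ‖a j‖ ^ 2

/-- The series `∑_{j} c_j F_j` converges unconditionally to `h` in `L²(μ)`. -/
def L2SumTo {α ι : Type*} [MeasurableSpace α] (μ : Measure α) (c : ι → ℂ)
    (F : ι → α → ℂ) (h : α → ℂ) : Prop :=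
  Tendsto (fun s : Finset ι => eLpNorm (fun t => h t - ∑ j ∈ s, c j * F j t) 2 μ)
    atTop (nhds 0)

/-- `(x_j : j ∈ ℤ)` is a Riesz-basis sequence with Riesz-basis constant `B`:
it is strictly increasing and the exponentials `e^{-i x_j t}` form a Riesz basis
of `L²[-π,π]`. -/
def RieszBasisSeq (x : ℤ → ℝ) (B : ℝ) : Prop :=
  StrictMono x ∧ 1 ≤ B ∧
    (∀ h : ℝ → ℂ, MemLp h 2 μπ →
      ∃! a : ℤ → ℂ, SqSummable a ∧ L2SumTo μπ a (rbFun x) h) ∧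
    (∀ c : ℤ → ℂ, SqSummable c →
      ∃ h : ℝ → ℂ, MemLp h 2 μπ ∧ L2SumTo μπ c (rbFun x) h ∧
        B⁻¹ * Real.sqrt (∑' j, ‖c j‖ ^ 2) ≤ (eLpNorm h 2 μπ).toReal ∧
        (eLpNorm h 2 μπ).toReal ≤ B * Real.sqrt (∑' j, ‖c j‖ ^ 2))

/-- Truncated Fourier integral `∫_{-N}^N f(t) e^{-iut} dt`. -/
def truncFT (f : ℝ → ℂ) (N : ℝ) (u : ℝ) : ℂ :=
  ∫ t in Set.Icc (-N) N, f t * Complex.exp (-(Complex.I * u * t))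

/-- `g` is the `L²` Fourier transform of `f` (normalization `F[f](u) = ∫ f(t)e^{-iut} dt`),
i.e. the truncated Fourier integrals of `f` converge to `g` in `L²(ℝ)`. -/
def IsFT (f g : ℝ → ℂ) : Prop :=
  MemLp f 2 volume ∧ MemLp g 2 volume ∧
    Tendsto (fun N : ℝ => eLpNorm (fun u => g u - truncFT f N u) 2 volume) atTop (nhds 0)

/-- The Paley–Wiener space `PW_π`: square-integrable functions whose Fourier transform
vanishes a.e. outside `[-π,π]`, identified with their continuous representatives. -/
def PW (f : ℝ → ℂ) : Prop :=
  MemLp f 2 volume ∧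
    ∃ φ : ℝ → ℂ, IsFT f φ ∧ (∀ᵐ u ∂(volume : Measure ℝ), u ∉ Iππ → φ u = 0) ∧
      ∀ t : ℝ, f t = (1 / (2 * (Real.pi : ℂ))) *
        ∫ u in Iππ, φ u * Complex.exp (Complex.I * u * t)

/-- The Gaussian `g_λ(t) = e^{-λ t²}`, as a complex number. -/
def gauss (lam t : ℝ) : ℂ := Real.exp (-(lam * t ^ 2))

/-- `a` is the (square-summable) coefficient sequence of the Gaussian interpolant to `f`
at the data sites `(x_j)`. -/
def GaussCoeffs (lam : ℝ) (x : ℤ → ℝ) (f : ℝ → ℂ) (a : ℤ → ℂ) : Prop :=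
  SqSummable a ∧ ∀ k : ℤ, HasSum (fun j => a j * gauss lam (x k - x j)) (f (x k))

/-- The Gaussian interpolant `x ↦ ∑_j a_j e^{-λ(x-x_j)²}`. -/
def gaussInterp (lam : ℝ) (x : ℤ → ℝ) (a : ℤ → ℂ) (t : ℝ) : ℂ :=
  ∑' j, a j * gauss lam (t - x j)

/-- `κ(α) = 2e^{-α}/(1-e^{-α})`. -/
def kappa (α : ℝ) : ℝ := 2 * Real.exp (-α) / (1 - Real.exp (-α))

/-- `Ψ` is the locally-`L²` function defined by the series `∑_j a_j e^{-i x_j u}`,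
via `L²` convergence on each interval `[(2l-1)π, (2l+1)π]`. -/
def LocL2Limit (x : ℤ → ℝ) (a : ℤ → ℂ) (Ψ : ℝ → ℂ) : Prop :=
  ∀ l : ℤ,
    MemLp Ψ 2 (volume.restrict (Set.Icc ((2 * l - 1) * Real.pi) ((2 * l + 1) * Real.pi))) ∧
    L2SumTo (volume.restrict (Set.Icc ((2 * l - 1) * Real.pi) ((2 * l + 1) * Real.pi)))
      a (rbFun x) Ψ

end

noncomputable section AuxProof
open MeasureTheory Filter Complex

namespace Aux7

lemma μπ_def : μπ = volume.restrict Iππ := rfl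

lemma Iππ_eq : Iππ = Set.Icc (-Real.pi) Real.pi := rfl

instance : IsFiniteMeasure μπ :=
  ⟨by rw [μπ_def, Measure.restrict_apply_univ]; exact measure_Icc_lt_top⟩

lemma continuous_rbFun (x : ℤ → ℝ) (j : ℤ) : Continuous (rbFun x j) := by
  unfold rbFun; fun_prop

lemma norm_rbFun (x : ℤ → ℝ) (j : ℤ) (t : ℝ) : ‖rbFun x j t‖ = 1 := by
  unfold rbFun
  rw [Complex.norm_exp]
  simp

lemma memLp_rbFun (x : ℤ → ℝ) (j : ℤ) : MemLp (rbFun x j) 2 μπ :=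
  (memLp_top_of_bound (continuous_rbFun x j).aestronglyMeasurable 1
    (Filter.Eventually.of_forall fun t => (norm_rbFun x j t).le)).mono_exponent le_top

lemma memLp_partial (x : ℤ → ℝ) (a : ℤ → ℂ) (s : Finset ℤ) :
    MemLp (fun u => ∑ j ∈ s, a j * rbFun x j u) 2 μπ :=
  memLp_finset_sum s (fun j _ => (memLp_rbFun x j).const_mul (a j))

lemma sq_eLpNorm {μ : Measure ℝ} {f : ℝ → ℂ} (hf : MemLp f 2 μ) :
    ((eLpNorm f 2 μ).toReal)^2 = ∫ u, ‖f u‖^2 ∂μ := by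
  have h1 : (eLpNorm f 2 μ).toReal = ‖hf.toLp f‖ := (Lp.norm_toLp f hf).symm
  rw [h1, ← inner_self_eq_norm_sq (𝕜 := ℂ) (hf.toLp f), L2.inner_def,
    ← integral_re (L2.integrable_inner _ _)]
  apply integral_congr_ae
  filter_upwards [hf.coeFn_toLp] with u hu
  rw [inner_self_eq_norm_sq (𝕜 := ℂ), hu]

lemma norm_exp_I_sub_one (θ : ℝ) : ‖Complex.exp (Complex.I * θ) - 1‖ ≤ 2 * |θ| := by
  have hnorm : ‖Complex.I * (θ:ℂ)‖ = |θ| := by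
    rw [norm_mul, Complex.norm_I, one_mul, Complex.norm_real, Real.norm_eq_abs]
  rcases le_or_gt (|θ|) 1 with h | h
  · have := Complex.norm_exp_sub_one_le (x := Complex.I * θ) (by rw [hnorm]; exact h)
    rw [hnorm] at this
    exact this
  · have h1 : ‖Complex.exp (Complex.I * θ)‖ = 1 := by
      rw [Complex.norm_exp]
      simp
    calc ‖Complex.exp (Complex.I * θ) - 1‖ ≤ ‖Complex.exp (Complex.I * θ)‖ + ‖(1:ℂ)‖ :=
          norm_sub_le _ _
    _ = 2 := by rw [h1, norm_one]; norm_num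
    _ ≤ 2 * |θ| := by nlinarith
  
lemma norm_rbFun_sub (x : ℤ → ℝ) (j k : ℤ) (u : ℝ) :
    ‖rbFun x j u - rbFun x k u‖ ≤ 2 * |x j - x k| * |u| := by
  have hfac : rbFun x j u - rbFun x k u
      = rbFun x k u * (Complex.exp (Complex.I * ((-((x j - x k) * u) : ℝ) : ℂ)) - 1) := by
    unfold rbFun
    have harg : -(Complex.I * ((x j : ℝ) : ℂ) * (u:ℂ))
        = -(Complex.I * ((x k : ℝ):ℂ) * (u:ℂ)) + Complex.I * ((-((x j - x k) * u) : ℝ) : ℂ) := by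
      push_cast
      ring
    rw [harg, Complex.exp_add, mul_sub, mul_one]
  rw [hfac, norm_mul, norm_rbFun, one_mul]
  calc ‖Complex.exp (Complex.I * ((-((x j - x k) * u) : ℝ) : ℂ)) - 1‖
      ≤ 2 * |(-((x j - x k) * u))| := norm_exp_I_sub_one _
  _ = 2 * |x j - x k| * |u| := by rw [abs_neg, abs_mul]; ring

lemma sep_weak (B : ℝ) (x : ℤ → ℝ) (hx : RieszBasisSeq x B) :
    ∃ δ : ℝ, 0 < δ ∧ ∀ j k : ℤ, δ * |(j:ℝ) - (k:ℝ)| ≤ |x j - x k| := by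
  classical
  obtain ⟨hmono, hB, _, hlow⟩ := hx
  have hπ := Real.pi_pos
  have hBpos : (0:ℝ) < B := lt_of_lt_of_le one_pos hB
  set K : ℝ := Real.sqrt ((8/3) * Real.pi^3) with hK
  have hKpos : 0 < K := Real.sqrt_pos.mpr (by positivity)
  set δ : ℝ := (B⁻¹ * Real.sqrt 2) / K with hδdef
  have hδpos : 0 < δ := by
    rw [hδdef]
    have : (0:ℝ) < Real.sqrt 2 := Real.sqrt_pos.mpr (by norm_num)
    positivity
  refine ⟨δ, hδpos, ?_⟩
  have hpair : ∀ j k : ℤ, j ≠ k → δ ≤ |x j - x k| := by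
    intro j k hjk
    set c : ℤ → ℂ := fun i => if i = j then 1 else if i = k then -1 else 0 with hc
    have hsupp : ∀ i ∉ ({j, k} : Finset ℤ), c i = 0 := by
      intro i hi
      simp only [Finset.mem_insert, Finset.mem_singleton, not_or] at hi
      simp [hc, hi.1, hi.2]
    have hcsq : SqSummable c :=
      summable_of_ne_finset_zero (s := ({j,k} : Finset ℤ))
        (fun i hi => by rw [hsupp i hi]; simp)
    obtain ⟨h, hmem, hsum, hlb, -⟩ := hlow c hcsq
    have hev : ∀ᶠ s : Finset ℤ in atTop,
        eLpNorm (fun t => h t - ∑ i ∈ s, c i * rbFun x i t) 2 μπ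
          = eLpNorm (fun t => h t - (rbFun x j t - rbFun x k t)) 2 μπ := by
      filter_upwards [Filter.eventually_ge_atTop ({j,k} : Finset ℤ)] with s hs
      congr 1
      funext t
      have hsub : ∑ i ∈ s, c i * rbFun x i t = ∑ i ∈ ({j,k} : Finset ℤ), c i * rbFun x i t :=
        (Finset.sum_subset hs (fun i _ hi => by rw [hsupp i hi, zero_mul])).symm
      rw [hsub, Finset.sum_pair hjk]
      have hcj : c j = 1 := by simp [hc]
      have hck : c k = -1 := by simp [hc, Ne.symm hjk]
      rw [hcj, hck]
      ring
    have h2 : Tendsto (fun _ : Finset ℤ =>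
        eLpNorm (fun t => h t - (rbFun x j t - rbFun x k t)) 2 μπ) atTop (nhds 0) :=
      (Filter.tendsto_congr' hev).mp hsum
    have hconst : eLpNorm (fun t => h t - (rbFun x j t - rbFun x k t)) 2 μπ = 0 :=
      tendsto_nhds_unique tendsto_const_nhds h2
    have hsubm : AEStronglyMeasurable (fun t => h t - (rbFun x j t - rbFun x k t)) μπ :=
      hmem.aestronglyMeasurable.sub
        (((continuous_rbFun x j).sub (continuous_rbFun x k)).aestronglyMeasurable)
    have hae := (eLpNorm_eq_zero_iff hsubm (by norm_num)).mp hconst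
    have hae' : h =ᵐ[μπ] fun t => rbFun x j t - rbFun x k t := by
      filter_upwards [hae] with t ht
      exact sub_eq_zero.mp ht
    have htsum : (∑' i, ‖c i‖^2) = (2:ℝ) := by
      rw [tsum_eq_sum (s := ({j,k} : Finset ℤ)) (fun i hi => by rw [hsupp i hi]; simp)]
      rw [Finset.sum_pair hjk]
      have hcj : c j = 1 := by simp [hc]
      have hck : c k = -1 := by simp [hc, Ne.symm hjk]
      rw [hcj, hck]
      norm_num
    have hL : B⁻¹ * Real.sqrt 2 ≤ (eLpNorm (fun t => rbFun x j t - rbFun x k t) 2 μπ).toReal := by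
      rw [htsum] at hlb
      rwa [eLpNorm_congr_ae hae'] at hlb
    have hmemjk : MemLp (fun t => rbFun x j t - rbFun x k t) 2 μπ :=
      (memLp_rbFun x j).sub (memLp_rbFun x k)
    have hU : ((eLpNorm (fun t => rbFun x j t - rbFun x k t) 2 μπ).toReal)^2
        ≤ (x j - x k)^2 * ((8/3) * Real.pi^3) := by
      rw [sq_eLpNorm hmemjk]
      have hint : ∫ u in Set.Icc (-Real.pi) Real.pi, u^2 = (2/3) * Real.pi^3 := by
        rw [MeasureTheory.integral_Icc_eq_integral_Ioc,
          ← intervalIntegral.integral_of_le (by linarith : -Real.pi ≤ Real.pi)]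
        rw [integral_pow]
        have hodd : (-Real.pi)^(2+1) = -(Real.pi^3) := by ring
        rw [hodd]
        norm_num
        ring
      have hmono2 : ∫ u, ‖rbFun x j u - rbFun x k u‖^2 ∂μπ
          ≤ ∫ u in Set.Icc (-Real.pi) Real.pi, (2*|x j - x k|)^2 * u^2 := by
        rw [μπ_def, Iππ_eq]
        apply setIntegral_mono_on
        · exact Continuous.integrableOn_Icc
            (((continuous_rbFun x j).sub (continuous_rbFun x k)).norm.pow 2)
        · exact Continuous.integrableOn_Icc (by fun_prop)
        · exact measurableSet_Icc
        · intro u _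
          have h1 := norm_rbFun_sub x j k u
          have h2 : ‖rbFun x j u - rbFun x k u‖^2 ≤ (2 * |x j - x k| * |u|)^2 :=
            pow_le_pow_left₀ (norm_nonneg _) h1 2
          calc ‖rbFun x j u - rbFun x k u‖^2 ≤ (2 * |x j - x k| * |u|)^2 := h2
          _ = (2*|x j - x k|)^2 * u^2 := by rw [mul_pow, _root_.sq_abs]
      have hc2 : ∫ u in Set.Icc (-Real.pi) Real.pi, (2*|x j - x k|)^2 * u^2
          = (2*|x j - x k|)^2 * ((2/3) * Real.pi^3) := by
        rw [integral_const_mul, hint]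
      calc ∫ u, ‖rbFun x j u - rbFun x k u‖^2 ∂μπ
          ≤ (2*|x j - x k|)^2 * ((2/3) * Real.pi^3) := by rw [← hc2]; exact hmono2
      _ = (x j - x k)^2 * ((8/3) * Real.pi^3) := by rw [mul_pow, _root_.sq_abs]; ring
    have hnn : (0:ℝ) ≤ (eLpNorm (fun t => rbFun x j t - rbFun x k t) 2 μπ).toReal :=
      ENNReal.toReal_nonneg
    have hUb : (eLpNorm (fun t => rbFun x j t - rbFun x k t) 2 μπ).toReal
        ≤ |x j - x k| * K := by
      calc (eLpNorm (fun t => rbFun x j t - rbFun x k t) 2 μπ).toReal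
          = Real.sqrt (((eLpNorm (fun t => rbFun x j t - rbFun x k t) 2 μπ).toReal)^2) :=
            (Real.sqrt_sq hnn).symm
      _ ≤ Real.sqrt ((x j - x k)^2 * ((8/3) * Real.pi^3)) := Real.sqrt_le_sqrt hU
      _ = |x j - x k| * K := by rw [Real.sqrt_mul (sq_nonneg _), Real.sqrt_sq_eq_abs, hK]
    rw [hδdef]
    rw [div_le_iff₀ hKpos]
    exact hL.trans hUb
  have hcons : ∀ k : ℤ, δ ≤ x (k+1) - x k := by
    intro k
    have := hpair (k+1) k (by omega)
    rwa [abs_of_pos (sub_pos.mpr (hmono (by omega)))] at this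
  have hchain : ∀ k j : ℤ, k ≤ j → δ * ((j:ℝ) - (k:ℝ)) ≤ x j - x k := by
    intro k j hkj
    obtain ⟨n, rfl⟩ : ∃ n : ℕ, j = k + n := ⟨(j - k).toNat, by omega⟩
    clear hkj
    induction n with
    | zero => simp
    | succ m ih =>
        have h1 := hcons (k + (m:ℕ))
        have hidx : (k + ((m+1 : ℕ) : ℤ)) = (k + (m:ℕ)) + 1 := by push_cast; ring
        rw [hidx]
        push_cast
        push_cast at ih
        linarith
  have hhalf : ∀ j k : ℤ, k ≤ j → δ * |(j:ℝ) - (k:ℝ)| ≤ |x j - x k| := by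
    intro j k hkj
    have hcast : (0:ℝ) ≤ (j:ℝ) - (k:ℝ) := by
      have : (k:ℝ) ≤ (j:ℝ) := by exact_mod_cast hkj
      linarith
    have hxm : x k ≤ x j := (hmono.le_iff_le).mpr hkj
    rw [_root_.abs_of_nonneg hcast, _root_.abs_of_nonneg (by linarith : (0:ℝ) ≤ x j - x k)]
    exact hchain k j hkj
  intro j k
  rcases le_total k j with h | h
  · exact hhalf j k h
  · rw [abs_sub_comm ((j:ℝ)) ((k:ℝ)), abs_sub_comm (x j) (x k)]
    exact hhalf k j h

lemma summable_w {c : ℝ} (hc : 0 < c) : Summable (fun m : ℤ => Real.exp (-(c * (m:ℝ)^2))) := by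
  have key : Summable (fun n : ℕ => Real.exp (-(c * (n:ℝ)^2))) := by
    apply Summable.of_nonneg_of_le (fun n => (Real.exp_pos _).le) (fun n => ?_)
      (summable_geometric_of_lt_one (Real.exp_pos (-c)).le (Real.exp_lt_one_iff.mpr (by linarith)))
    rw [← Real.exp_nat_mul]
    apply Real.exp_le_exp.mpr
    have hn : (n:ℝ) ≤ (n:ℝ)^2 := by
      rcases Nat.eq_zero_or_pos n with h | h
      · simp [h]
      · have h1 : (1:ℝ) ≤ (n:ℝ) := by exact_mod_cast h
        nlinarith
    nlinarith
  apply Summable.of_nat_of_neg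
  · exact key
  · have : (fun n : ℕ => Real.exp (-(c * (((-(n:ℤ)):ℤ):ℝ)^2))) = fun n : ℕ => Real.exp (-(c * (n:ℝ)^2)) := by
      funext n
      congr 1
      push_cast
      ring
    rw [this]
    exact key

lemma summable_FF (lam : ℝ) (hlam : 0 < lam) (x : ℤ → ℝ) (a : ℤ → ℂ)
    (ha : Summable fun j => ‖a j‖^2) {δ : ℝ} (hδ : 0 < δ)
    (hsep : ∀ j k : ℤ, δ * |(j:ℝ) - (k:ℝ)| ≤ |x j - x k|) :
    Summable (fun p : ℤ × ℤ => ‖a p.1 * (starRingEnd ℂ) (a p.2) * gauss lam (x p.1 - x p.2)‖) := by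
  classical
  have hw : Summable (fun m : ℤ => Real.exp (-((lam * δ^2) * (m:ℝ)^2))) := summable_w (by positivity)
  have hwpos : ∀ m : ℤ, 0 ≤ Real.exp (-((lam * δ^2) * (m:ℝ)^2)) := fun m => (Real.exp_pos _).le
  let e1 : (ℤ × ℤ) ≃ (ℤ × ℤ) :=
    ⟨fun p => (p.1, p.1 - p.2), fun p => (p.1, p.1 - p.2),
     fun p => by simp, fun p => by simp⟩
  let e2 : (ℤ × ℤ) ≃ (ℤ × ℤ) :=
    ⟨fun p => (p.1 - p.2, p.2), fun p => (p.1 + p.2, p.2),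
     fun p => by simp, fun p => by simp⟩
  have S1 : Summable (fun p : ℤ × ℤ => ‖a p.1‖^2 * Real.exp (-((lam * δ^2) * ((p.1 - p.2 : ℤ):ℝ)^2))) := by
    have base := ha.mul_of_nonneg hw (fun j => sq_nonneg _) hwpos
    exact (base.comp_injective e1.injective).congr (fun p => rfl)
  have S2 : Summable (fun p : ℤ × ℤ => Real.exp (-((lam * δ^2) * ((p.1 - p.2 : ℤ):ℝ)^2)) * ‖a p.2‖^2) := by
    have base := hw.mul_of_nonneg ha hwpos (fun j => sq_nonneg _)
    exact (base.comp_injective e2.injective).congr (fun p => rfl)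
  apply Summable.of_nonneg_of_le (fun p => norm_nonneg _) ?_ ((S1.add S2).div_const 2)
  intro p
  have hnorm : ‖a p.1 * (starRingEnd ℂ) (a p.2) * gauss lam (x p.1 - x p.2)‖
      = ‖a p.1‖ * ‖a p.2‖ * Real.exp (-(lam * (x p.1 - x p.2)^2)) := by
    unfold gauss
    rw [norm_mul, norm_mul, RCLike.norm_conj, Complex.norm_real, Real.norm_eq_abs,
      abs_of_pos (Real.exp_pos _)]
  rw [hnorm]
  have hEW : Real.exp (-(lam * (x p.1 - x p.2)^2)) ≤ Real.exp (-((lam * δ^2) * ((p.1 - p.2 : ℤ):ℝ)^2)) := by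
    apply Real.exp_le_exp.mpr
    have h1 : δ * |(p.1:ℝ) - (p.2:ℝ)| ≤ |x p.1 - x p.2| := hsep p.1 p.2
    have h2 : (δ * |(p.1:ℝ) - (p.2:ℝ)|)^2 ≤ (x p.1 - x p.2)^2 := by
      rw [← _root_.sq_abs (x p.1 - x p.2)]
      exact pow_le_pow_left₀ (by positivity) h1 2
    have h3 : ((p.1 - p.2 : ℤ):ℝ)^2 = ((p.1:ℝ) - (p.2:ℝ))^2 := by push_cast; ring
    rw [h3]
    have h4 : δ^2 * ((p.1:ℝ) - (p.2:ℝ))^2 ≤ (x p.1 - x p.2)^2 := by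
      rw [← _root_.sq_abs ((p.1:ℝ) - (p.2:ℝ))]
      calc δ^2 * |(p.1:ℝ) - (p.2:ℝ)|^2 = (δ * |(p.1:ℝ) - (p.2:ℝ)|)^2 := by ring
      _ ≤ (x p.1 - x p.2)^2 := h2
    nlinarith
  set A := ‖a p.1‖
  set Bb := ‖a p.2‖
  set W := Real.exp (-((lam * δ^2) * ((p.1 - p.2 : ℤ):ℝ)^2))
  set E := Real.exp (-(lam * (x p.1 - x p.2)^2))
  have hA : 0 ≤ A := norm_nonneg _
  have hBb : 0 ≤ Bb := norm_nonneg _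
  have hE0 : 0 ≤ E := (Real.exp_pos _).le
  have hW0 : 0 ≤ W := (Real.exp_pos _).le
  nlinarith [mul_nonneg (mul_nonneg hA hBb) (sub_nonneg.mpr hEW),
    mul_nonneg (sq_nonneg (A - Bb)) hW0]

lemma gauss_ft (lam : ℝ) (hlam : 0 < lam) (ξ : ℝ) :
    ∫ u : ℝ, ((Real.sqrt (Real.pi / lam) * Real.exp (-((1/(4*lam)) * u^2)) : ℝ) : ℂ)
        * Complex.exp (-(Complex.I * ξ * u))
      = ((2 * Real.pi : ℝ) : ℂ) * gauss lam ξ := by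
  have hπ := Real.pi_pos
  have hb : (0:ℝ) < 1/(4*lam) := by positivity
  have h := fourierIntegral_gaussian (b := ((1/(4*lam) : ℝ) : ℂ))
    (by simpa using hb) (-(ξ:ℂ))
  have hre : (fun u : ℝ => ((Real.sqrt (Real.pi / lam) * Real.exp (-((1/(4*lam)) * u^2)) : ℝ) : ℂ)
        * Complex.exp (-(Complex.I * ξ * u)))
      = fun u : ℝ => ((Real.sqrt (Real.pi / lam) : ℝ) : ℂ) *
          (Complex.exp (Complex.I * (-(ξ:ℂ)) * (u:ℂ)) *
            Complex.exp (-((1/(4*lam) : ℝ):ℂ) * (u:ℂ)^2)) := by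
    funext u
    rw [Complex.ofReal_mul, Complex.ofReal_exp]
    have h1 : ((-((1/(4*lam)) * u^2) : ℝ) : ℂ) = -((1/(4*lam) : ℝ):ℂ) * (u:ℂ)^2 := by
      push_cast; ring
    have h2 : -(Complex.I * (ξ:ℂ) * (u:ℂ)) = Complex.I * (-(ξ:ℂ)) * (u:ℂ) := by ring
    rw [h1, h2]
    ring
  rw [hre, integral_const_mul, h]
  have h4 : ((Real.pi : ℂ) / ((1/(4*lam) : ℝ) : ℂ)) = ((4*Real.pi*lam : ℝ) : ℂ) := by
    have hlc : ((lam:ℝ):ℂ) ≠ 0 := Complex.ofReal_ne_zero.mpr hlam.ne'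
    push_cast
    field_simp
  have h5 : ((4*Real.pi*lam : ℝ) : ℂ) ^ (1/2 : ℂ) = ((Real.sqrt (4*Real.pi*lam) : ℝ) : ℂ) := by
    have hhalf : ((1:ℂ)/2) = (((1:ℝ)/2 : ℝ) : ℂ) := by norm_num
    rw [hhalf, ← Complex.ofReal_cpow (by positivity), Real.sqrt_eq_rpow]
  have h6 : -(-(ξ:ℂ))^2 / (4 * ((1/(4*lam) : ℝ) : ℂ)) = ((-(lam * ξ^2) : ℝ) : ℂ) := by
    have hlc : ((lam:ℝ):ℂ) ≠ 0 := Complex.ofReal_ne_zero.mpr hlam.ne'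
    push_cast
    field_simp
  rw [h4, h5, h6]
  unfold gauss
  rw [← Complex.ofReal_exp]
  rw [← Complex.ofReal_mul, ← Complex.ofReal_mul, ← Complex.ofReal_mul]
  congr 1
  rw [← mul_assoc]
  congr 1
  rw [← Real.sqrt_mul (by positivity)]
  have h7 : Real.pi / lam * (4*Real.pi*lam) = (2*Real.pi)^2 := by
    field_simp
    ring
  rw [h7, Real.sqrt_sq (by positivity)]

lemma integrable_G_mul (lam : ℝ) (hlam : 0 < lam) {h : ℝ → ℂ}
    (hc : AEStronglyMeasurable h (volume : Measure ℝ))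
    (C : ℝ) (hC : ∀ u, ‖h u‖ ≤ C) :
    Integrable (fun u : ℝ =>
      ((Real.sqrt (Real.pi / lam) * Real.exp (-((1/(4*lam)) * u^2)) : ℝ) : ℂ) * h u) volume := by
  have hb : (0:ℝ) < 1/(4*lam) := by positivity
  have hG : Integrable (fun u : ℝ => Real.sqrt (Real.pi / lam) * Real.exp (-((1/(4*lam)) * u^2))) volume := by
    have := (integrable_exp_neg_mul_sq hb).const_mul (Real.sqrt (Real.pi / lam))
    simpa [neg_mul] using this
  have hGC : Integrable (fun u : ℝ =>
      ((Real.sqrt (Real.pi / lam) * Real.exp (-((1/(4*lam)) * u^2)) : ℝ) : ℂ)) volume :=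
    hG.ofReal
  have := Integrable.bdd_mul hGC hc (Filter.Eventually.of_forall hC)
  simpa [mul_comm] using this

lemma key_ineq (lam : ℝ) (hlam : 0 < lam) (x : ℤ → ℝ) (a : ℤ → ℂ) (s : Finset ℤ) :
    Real.sqrt (Real.pi / lam) * Real.exp (-((1/(4*lam)) * Real.pi^2)) *
      ((eLpNorm (fun u => ∑ j ∈ s, a j * rbFun x j u) 2 μπ).toReal)^2
    ≤ (((2 * Real.pi : ℝ) : ℂ) *
        ∑ p ∈ s ×ˢ s, a p.1 * (starRingEnd ℂ) (a p.2) * gauss lam (x p.1 - x p.2)).re := by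
  classical
  have hπ := Real.pi_pos
  have hb : (0:ℝ) < 1/(4*lam) := by positivity
  set S : ℝ → ℂ := fun u => ∑ j ∈ s, a j * rbFun x j u with hS
  have hScont : Continuous S := continuous_finset_sum _ (fun j _ => continuous_const.mul (continuous_rbFun x j))
  have hSbd : ∀ u, ‖S u‖ ≤ ∑ j ∈ s, ‖a j‖ := by
    intro u
    refine (norm_sum_le _ _).trans ?_
    apply Finset.sum_le_sum
    intro j _
    rw [norm_mul, norm_rbFun, mul_one]
  -- identity: 2π ∑∑ = ∫ G * S * conj S
  have hconjE : ∀ (k : ℤ) (u : ℝ), (starRingEnd ℂ) (rbFun x k u)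
      = Complex.exp (Complex.I * (x k : ℂ) * (u : ℂ)) := by
    intro k u
    unfold rbFun
    rw [← Complex.exp_conj]
    congr 1
    simp [Complex.conj_ofReal]
  have hSconj : ∀ u : ℝ, S u * (starRingEnd ℂ) (S u)
      = ∑ p ∈ s ×ˢ s, a p.1 * (starRingEnd ℂ) (a p.2)
          * Complex.exp (-(Complex.I * ((x p.1 - x p.2 : ℝ) : ℂ) * (u:ℂ))) := by
    intro u
    rw [hS]
    rw [map_sum, Finset.sum_mul_sum]
    rw [← Finset.sum_product']
    apply Finset.sum_congr rfl
    intro p _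
    rw [map_mul, hconjE]
    have harg : -(Complex.I * ((x p.1 : ℝ):ℂ) * (u:ℂ)) + Complex.I * ((x p.2 : ℝ):ℂ) * (u:ℂ)
        = -(Complex.I * ((x p.1 - x p.2 : ℝ) : ℂ) * (u:ℂ)) := by
      push_cast; ring
    calc (a p.1 * rbFun x p.1 u) * ((starRingEnd ℂ) (a p.2) * Complex.exp (Complex.I * ((x p.2:ℝ):ℂ) * (u:ℂ)))
        = a p.1 * (starRingEnd ℂ) (a p.2) *
            (Complex.exp (-(Complex.I * ((x p.1:ℝ):ℂ) * (u:ℂ))) * Complex.exp (Complex.I * ((x p.2:ℝ):ℂ) * (u:ℂ))) := by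
          unfold rbFun; ring
      _ = a p.1 * (starRingEnd ℂ) (a p.2) * Complex.exp (-(Complex.I * ((x p.1 - x p.2 : ℝ):ℂ) * (u:ℂ))) := by
          rw [← Complex.exp_add, harg]
  have hint : ∀ p : ℤ × ℤ, Integrable (fun u : ℝ =>
      ((Real.sqrt (Real.pi / lam) * Real.exp (-((1/(4*lam)) * u^2)) : ℝ) : ℂ)
        * (a p.1 * (starRingEnd ℂ) (a p.2)
            * Complex.exp (-(Complex.I * ((x p.1 - x p.2:ℝ):ℂ) * (u:ℂ))))) volume := by
    intro p
    refine integrable_G_mul lam hlam ?_ (‖a p.1 * (starRingEnd ℂ) (a p.2)‖) ?_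
    · exact (continuous_const.mul (Complex.continuous_exp.comp (by fun_prop))).aestronglyMeasurable
    intro u
    rw [norm_mul]
    have : ‖Complex.exp (-(Complex.I * ((x p.1 - x p.2:ℝ):ℂ) * (u:ℂ)))‖ = 1 := by
      rw [Complex.norm_exp]
      simp
    rw [this, mul_one]
  have hId : (((2 * Real.pi : ℝ) : ℂ) *
        ∑ p ∈ s ×ˢ s, a p.1 * (starRingEnd ℂ) (a p.2) * gauss lam (x p.1 - x p.2))
      = ∫ u : ℝ, ((Real.sqrt (Real.pi / lam) * Real.exp (-((1/(4*lam)) * u^2)) : ℝ) : ℂ)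
          * (S u * (starRingEnd ℂ) (S u)) := by
    rw [Finset.mul_sum]
    have hterm : ∀ p ∈ s ×ˢ s, ((2 * Real.pi : ℝ) : ℂ) * (a p.1 * (starRingEnd ℂ) (a p.2) * gauss lam (x p.1 - x p.2))
        = ∫ u : ℝ, ((Real.sqrt (Real.pi / lam) * Real.exp (-((1/(4*lam)) * u^2)) : ℝ) : ℂ)
            * (a p.1 * (starRingEnd ℂ) (a p.2)
                * Complex.exp (-(Complex.I * ((x p.1 - x p.2:ℝ):ℂ) * (u:ℂ)))) := by
      intro p _
      have hswap : (fun u : ℝ => ((Real.sqrt (Real.pi / lam) * Real.exp (-((1/(4*lam)) * u^2)) : ℝ) : ℂ)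
            * (a p.1 * (starRingEnd ℂ) (a p.2)
                * Complex.exp (-(Complex.I * ((x p.1 - x p.2:ℝ):ℂ) * (u:ℂ)))))
          = fun u : ℝ => (a p.1 * (starRingEnd ℂ) (a p.2)) *
              (((Real.sqrt (Real.pi / lam) * Real.exp (-((1/(4*lam)) * u^2)) : ℝ) : ℂ)
                * Complex.exp (-(Complex.I * ((x p.1 - x p.2:ℝ):ℂ) * (u:ℂ)))) := by
        funext u; ring
      rw [hswap, integral_const_mul, gauss_ft lam hlam (x p.1 - x p.2)]
      ring
    rw [Finset.sum_congr rfl hterm, ← integral_finset_sum _ (fun p _ => hint p)]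
    congr 1
    funext u
    rw [← Finset.mul_sum, hSconj u]
  have hpoint : ∀ u : ℝ, (((Real.sqrt (Real.pi / lam) * Real.exp (-((1/(4*lam)) * u^2)) : ℝ) : ℂ)
      * (S u * (starRingEnd ℂ) (S u))).re
      = (Real.sqrt (Real.pi / lam) * Real.exp (-((1/(4*lam)) * u^2))) * ‖S u‖^2 := by
    intro u
    rw [Complex.mul_conj, ← Complex.ofReal_mul, Complex.ofReal_re]
    rw [Complex.normSq_eq_norm_sq]
  have hintS : Integrable (fun u : ℝ =>
      ((Real.sqrt (Real.pi / lam) * Real.exp (-((1/(4*lam)) * u^2)) : ℝ) : ℂ)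
        * (S u * (starRingEnd ℂ) (S u))) volume := by
    refine integrable_G_mul lam hlam ?_ ((∑ j ∈ s, ‖a j‖)^2) ?_
    · exact (hScont.mul (Complex.continuous_conj.comp hScont)).aestronglyMeasurable
    intro u
    rw [norm_mul, RCLike.norm_conj]
    calc ‖S u‖ * ‖S u‖ = ‖S u‖^2 := by ring
    _ ≤ (∑ j ∈ s, ‖a j‖)^2 := pow_le_pow_left₀ (norm_nonneg _) (hSbd u) 2
  have hre : ((((2 * Real.pi : ℝ) : ℂ) *
        ∑ p ∈ s ×ˢ s, a p.1 * (starRingEnd ℂ) (a p.2) * gauss lam (x p.1 - x p.2)).re)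
      = ∫ u : ℝ, (Real.sqrt (Real.pi / lam) * Real.exp (-((1/(4*lam)) * u^2))) * ‖S u‖^2 := by
    rw [hId, ← RCLike.re_to_complex, ← integral_re hintS]
    apply integral_congr_ae
    apply Filter.Eventually.of_forall
    intro u
    exact hpoint u
  rw [hre]
  have hintR : Integrable (fun u : ℝ =>
      (Real.sqrt (Real.pi / lam) * Real.exp (-((1/(4*lam)) * u^2))) * ‖S u‖^2) volume := by
    have := hintS.re
    apply this.congr
    apply Filter.Eventually.of_forall
    intro u
    exact (hpoint u)
  have hGpos : ∀ u : ℝ, 0 ≤ (Real.sqrt (Real.pi / lam) * Real.exp (-((1/(4*lam)) * u^2))) * ‖S u‖^2 :=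
    fun u => mul_nonneg (by positivity) (sq_nonneg _)
  have h1 : ∫ u in Iππ, (Real.sqrt (Real.pi / lam) * Real.exp (-((1/(4*lam)) * u^2))) * ‖S u‖^2
      ≤ ∫ u : ℝ, (Real.sqrt (Real.pi / lam) * Real.exp (-((1/(4*lam)) * u^2))) * ‖S u‖^2 :=
    setIntegral_le_integral hintR (Filter.Eventually.of_forall hGpos)
  have h2 : ∫ u in Iππ, (Real.sqrt (Real.pi / lam) * Real.exp (-((1/(4*lam)) * Real.pi^2))) * ‖S u‖^2
      ≤ ∫ u in Iππ, (Real.sqrt (Real.pi / lam) * Real.exp (-((1/(4*lam)) * u^2))) * ‖S u‖^2 := by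
    rw [Iππ_eq]
    apply setIntegral_mono_on
    · exact Continuous.integrableOn_Icc (continuous_const.mul ((hScont.norm).pow 2))
    · rw [← Iππ_eq]
      exact hintR.integrableOn
    · exact measurableSet_Icc
    · intro u hu
      apply mul_le_mul_of_nonneg_right _ (sq_nonneg _)
      apply mul_le_mul_of_nonneg_left _ (Real.sqrt_nonneg _)
      apply Real.exp_le_exp.mpr
      have hu2 : u^2 ≤ Real.pi^2 := by
        have h5 : |u| ≤ Real.pi := abs_le.mpr ⟨hu.1, hu.2⟩
        nlinarith [abs_nonneg u, _root_.sq_abs u]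
      nlinarith
  have h3 : ∫ u in Iππ, (Real.sqrt (Real.pi / lam) * Real.exp (-((1/(4*lam)) * Real.pi^2))) * ‖S u‖^2
      = Real.sqrt (Real.pi / lam) * Real.exp (-((1/(4*lam)) * Real.pi^2)) *
          ((eLpNorm S 2 μπ).toReal)^2 := by
    rw [integral_const_mul]
    congr 1
    rw [sq_eLpNorm (μ := μπ) (memLp_partial x a s)]
    rfl
  calc Real.sqrt (Real.pi / lam) * Real.exp (-((1/(4*lam)) * Real.pi^2)) *
      ((eLpNorm (fun u => ∑ j ∈ s, a j * rbFun x j u) 2 μπ).toReal)^2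
      = ∫ u in Iππ, (Real.sqrt (Real.pi / lam) * Real.exp (-((1/(4*lam)) * Real.pi^2))) * ‖S u‖^2 := h3.symm
  _ ≤ ∫ u in Iππ, (Real.sqrt (Real.pi / lam) * Real.exp (-((1/(4*lam)) * u^2))) * ‖S u‖^2 := h2
  _ ≤ ∫ u : ℝ, (Real.sqrt (Real.pi / lam) * Real.exp (-((1/(4*lam)) * u^2))) * ‖S u‖^2 := h1

lemma truncFT_continuous {f : ℝ → ℂ} (hf : MemLp f 2 (volume : Measure ℝ)) (N : ℝ) :
    Continuous (truncFT f N) := by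
  unfold truncFT
  have hfin : IsFiniteMeasure (volume.restrict (Set.Icc (-N) N)) :=
    ⟨by rw [Measure.restrict_apply_univ]; exact measure_Icc_lt_top⟩
  have hfint : Integrable f (volume.restrict (Set.Icc (-N) N)) :=
    MemLp.integrable (by norm_num) (hf.restrict _)
  apply continuous_of_dominated (bound := fun t => ‖f t‖)
  · intro u
    exact hfint.aestronglyMeasurable.mul
      ((Complex.continuous_exp.comp (by fun_prop)).aestronglyMeasurable)
  · intro u
    apply Filter.Eventually.of_forall
    intro t
    rw [norm_mul]
    have h1 : ‖Complex.exp (-(Complex.I * (u:ℂ) * (t:ℂ)))‖ = 1 := by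
      rw [Complex.norm_exp]
      simp
    rw [h1, mul_one]
  · exact hfint.norm
  · apply Filter.Eventually.of_forall
    intro t
    apply continuous_const.mul
    exact Complex.continuous_exp.comp (by fun_prop)

lemma isFT_unique {f g1 g2 : ℝ → ℂ} (h1 : IsFT f g1) (h2 : IsFT f g2) :
    g1 =ᵐ[(volume : Measure ℝ)] g2 := by
  obtain ⟨hfm, hg1, ht1⟩ := h1
  obtain ⟨-, hg2, ht2⟩ := h2
  have haesm : ∀ N : ℝ, AEStronglyMeasurable (truncFT f N) (volume : Measure ℝ) :=
    fun N => (truncFT_continuous hfm N).aestronglyMeasurable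
  have key : eLpNorm (fun u => g1 u - g2 u) 2 (volume : Measure ℝ) = 0 := by
    have hb : ∀ N : ℝ, eLpNorm (fun u => g1 u - g2 u) 2 (volume : Measure ℝ)
        ≤ eLpNorm (fun u => g1 u - truncFT f N u) 2 volume
          + eLpNorm (fun u => truncFT f N u - g2 u) 2 volume := by
      intro N
      have hsplit : (fun u => g1 u - g2 u)
          = (fun u => g1 u - truncFT f N u) + (fun u => truncFT f N u - g2 u) := by
        funext u
        simp
      rw [hsplit]
      exact eLpNorm_add_le (hg1.aestronglyMeasurable.sub (haesm N))
        ((haesm N).sub hg2.aestronglyMeasurable) (by norm_num)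
    have ht2' : Tendsto (fun N : ℝ => eLpNorm (fun u => truncFT f N u - g2 u) 2 volume)
        atTop (nhds 0) := by
      apply ht2.congr
      intro N
      exact eLpNorm_sub_comm g2 (truncFT f N) 2 volume
    have hsum : Tendsto (fun N : ℝ => eLpNorm (fun u => g1 u - truncFT f N u) 2 volume
        + eLpNorm (fun u => truncFT f N u - g2 u) 2 volume) atTop (nhds 0) := by
      have := Filter.Tendsto.add ht1 ht2'
      simpa using this
    exact le_antisymm (ge_of_tendsto' hsum hb) zero_le
  have := (eLpNorm_eq_zero_iff (hg1.aestronglyMeasurable.sub hg2.aestronglyMeasurable)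
    (by norm_num)).mp key
  filter_upwards [this] with u hu
  exact sub_eq_zero.mp hu

lemma coeFn_sum_smul (x : ℤ → ℝ) (a : ℤ → ℂ) (s : Finset ℤ) :
    (((∑ j ∈ s, a j • (memLp_rbFun x j).toLp (rbFun x j)) : Lp ℂ 2 μπ) : ℝ → ℂ)
      =ᵐ[μπ] fun u => ∑ j ∈ s, a j * rbFun x j u := by
  classical
  induction s using Finset.induction_on with
  | empty =>
      simp only [Finset.sum_empty]
      filter_upwards [Lp.coeFn_zero ℂ 2 μπ] with u hu
      simpa using hu
  | insert j t hj ih =>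
      rw [Finset.sum_insert hj]
      filter_upwards [Lp.coeFn_add (a j • (memLp_rbFun x j).toLp (rbFun x j))
          (∑ i ∈ t, a i • (memLp_rbFun x i).toLp (rbFun x i)),
        Lp.coeFn_smul (a j) ((memLp_rbFun x j).toLp (rbFun x j)),
        (memLp_rbFun x j).coeFn_toLp, ih] with u h1 h2 h3 h4
      rw [h1]
      simp only [Pi.add_apply]
      rw [h2]
      simp only [Pi.smul_apply, smul_eq_mul]
      rw [h3, h4, Finset.sum_insert hj]

end Aux7
end AuxProof

open MeasureTheory Filter Complex in
/-- With `ψ_λ` the restriction to `[-π,π]` of `Ψ_λ(u) = ∑_j a(j,λ) e^{-i x_j u}` (the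
coefficients of the Gaussian interpolant of `f ∈ PW_π`), one has
`‖ψ_λ‖_{L²[-π,π]} ≤ √(λ/π) e^{π²/(4λ)} ‖F[f]‖_{L²[-π,π]}`. -/
theorem statement7 (lam B : ℝ) (hlam : 0 < lam) (x : ℤ → ℝ) (hx : RieszBasisSeq x B)
    (f : ℝ → ℂ) (hf : PW f) (a : ℤ → ℂ) (ha : GaussCoeffs lam x f a)
    (Ψ : ℝ → ℂ) (hΨ : LocL2Limit x a Ψ) (φ : ℝ → ℂ) (hφ : IsFT f φ) :
    (eLpNorm Ψ 2 μπ).toReal ≤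
      Real.sqrt (lam / Real.pi) * Real.exp (Real.pi ^ 2 / (4 * lam)) *
        (eLpNorm φ 2 μπ).toReal := by
  classical
  have hπ := Real.pi_pos
  obtain ⟨haSq, haSum⟩ := ha
  obtain ⟨hfmem, φ₀, hFT₀, hφ₀supp, hrep⟩ := hf
  -- φ agrees a.e. with the canonical Fourier transform φ₀
  have hφae : φ =ᵐ[(volume : Measure ℝ)] φ₀ := Aux7.isFT_unique hφ hFT₀
  have hφaeπ : φ =ᵐ[μπ] φ₀ := by
    rw [Aux7.μπ_def]
    exact ae_restrict_of_ae hφae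
  -- Ψ data on [-π,π]
  have hIcc0 : Set.Icc ((2 * ((0:ℤ):ℝ) - 1) * Real.pi) ((2 * ((0:ℤ):ℝ) + 1) * Real.pi) = Iππ := by
    rw [Aux7.Iππ_eq]
    norm_num
  obtain ⟨hΨmem0, hΨsum0⟩ := hΨ 0
  rw [hIcc0, ← Aux7.μπ_def] at hΨmem0
  have hΨsum : L2SumTo μπ a (rbFun x) Ψ := by
    rw [show (μπ : Measure ℝ)
        = volume.restrict (Set.Icc ((2 * ((0:ℤ):ℝ) - 1) * Real.pi) ((2 * ((0:ℤ):ℝ) + 1) * Real.pi))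
      from by rw [hIcc0, ← Aux7.μπ_def]]
    exact hΨsum0
  -- separation
  obtain ⟨δ, hδ, hsep⟩ := Aux7.sep_weak B x hx
  -- Lp elements
  have hφmem : MemLp φ 2 μπ := by
    rw [Aux7.μπ_def]
    exact (hφ.2.1).restrict _
  set ΨL : Lp ℂ 2 μπ := hΨmem0.toLp Ψ with hΨL
  set φL : Lp ℂ 2 μπ := hφmem.toLp φ with hφLdef
  set SL : Finset ℤ → Lp ℂ 2 μπ :=
    fun s => ∑ j ∈ s, a j • (Aux7.memLp_rbFun x j).toLp (rbFun x j) with hSLdef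
  have hdist : ∀ s : Finset ℤ, dist (SL s) ΨL
      = (eLpNorm (fun t => Ψ t - ∑ j ∈ s, a j * rbFun x j t) 2 μπ).toReal := by
    intro s
    rw [dist_comm, dist_eq_norm, Lp.norm_def]
    congr 1
    apply eLpNorm_congr_ae
    filter_upwards [Lp.coeFn_sub ΨL (SL s), Aux7.coeFn_sum_smul x a s, hΨmem0.coeFn_toLp]
      with u h1 h2 h3
    rw [h1]
    simp only [Pi.sub_apply]
    rw [h2, h3]
  have htend : Tendsto SL atTop (nhds ΨL) := by
    rw [tendsto_iff_dist_tendsto_zero]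
    have h0 : Tendsto (fun s : Finset ℤ =>
        (eLpNorm (fun t => Ψ t - ∑ j ∈ s, a j * rbFun x j t) 2 μπ).toReal) atTop (nhds 0) := by
      have := (ENNReal.tendsto_toReal (by norm_num : (0:ENNReal) ≠ ⊤)).comp hΨsum
      simpa [Function.comp_def] using this
    exact h0.congr (fun s => (hdist s).symm)
  -- inner products with φL
  have hα : ∀ j : ℤ, (inner ℂ φL ((Aux7.memLp_rbFun x j).toLp (rbFun x j)) : ℂ)
      = ((2 * Real.pi : ℝ) : ℂ) * (starRingEnd ℂ) (f (x j)) := by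
    intro j
    rw [L2.inner_def]
    have h1 : ∫ u, (inner ℂ ((φL : ℝ → ℂ) u) (((Aux7.memLp_rbFun x j).toLp (rbFun x j) : ℝ → ℂ) u) : ℂ) ∂μπ
        = ∫ u, (starRingEnd ℂ) (φ₀ u) * rbFun x j u ∂μπ := by
      apply integral_congr_ae
      filter_upwards [hφmem.coeFn_toLp, (Aux7.memLp_rbFun x j).coeFn_toLp, hφaeπ]
        with u e1 e2 e3
      rw [RCLike.inner_apply', e1, e2, e3]
    rw [h1]
    have h2 : ∫ u, (starRingEnd ℂ) (φ₀ u) * rbFun x j u ∂μπ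
        = (starRingEnd ℂ) (∫ u, φ₀ u * Complex.exp (Complex.I * (u:ℂ) * ((x j : ℝ):ℂ)) ∂μπ) := by
      rw [← integral_conj]
      apply integral_congr_ae
      apply Filter.Eventually.of_forall
      intro u
      beta_reduce
      rw [map_mul]
      congr 1
      unfold rbFun
      rw [← Complex.exp_conj]
      congr 1
      simp only [map_mul, map_neg, Complex.conj_I, Complex.conj_ofReal]
      ring
    rw [h2]
    have h3 : ∫ u, φ₀ u * Complex.exp (Complex.I * (u:ℂ) * ((x j : ℝ):ℂ)) ∂μπ
        = ((2 * Real.pi : ℝ) : ℂ) * f (x j) := by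
      have hrj := hrep (x j)
      have hμ : ∫ u in Iππ, φ₀ u * Complex.exp (Complex.I * (u:ℂ) * ((x j:ℝ):ℂ))
          = ∫ u, φ₀ u * Complex.exp (Complex.I * (u:ℂ) * ((x j:ℝ):ℂ)) ∂μπ := rfl
      rw [hμ] at hrj
      rw [hrj]
      have hne : (2 * (Real.pi:ℂ)) ≠ 0 :=
        mul_ne_zero two_ne_zero (Complex.ofReal_ne_zero.mpr Real.pi_ne_zero)
      push_cast
      field_simp
      congr 1; funext u; ring
    rw [h3, map_mul, Complex.conj_ofReal]
  have hinnerS : ∀ s : Finset ℤ, (inner ℂ φL (SL s) : ℂ)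
      = ∑ j ∈ s, a j * (((2 * Real.pi : ℝ) : ℂ) * (starRingEnd ℂ) (f (x j))) := by
    intro s
    rw [hSLdef]
    rw [inner_sum]
    apply Finset.sum_congr rfl
    intro j _
    rw [inner_smul_right, hα]
  have hHS1 : HasSum (fun j => a j * (((2 * Real.pi : ℝ) : ℂ) * (starRingEnd ℂ) (f (x j))))
      (inner ℂ φL ΨL : ℂ) := by
    have hT := Filter.Tendsto.inner (𝕜 := ℂ) (tendsto_const_nhds (x := φL)) htend
    exact Filter.Tendsto.congr hinnerS hT
  -- the absolutely convergent double series
  have hFnorm : Summable (fun p : ℤ × ℤ =>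
      ‖a p.1 * (starRingEnd ℂ) (a p.2) * gauss lam (x p.1 - x p.2)‖) :=
    Aux7.summable_FF lam hlam x a haSq hδ hsep
  have hFsum : Summable (fun p : ℤ × ℤ =>
      a p.1 * (starRingEnd ℂ) (a p.2) * gauss lam (x p.1 - x p.2)) :=
    Summable.of_norm hFnorm
  have hHT : HasSum (fun p : ℤ × ℤ => a p.1 * (starRingEnd ℂ) (a p.2) * gauss lam (x p.1 - x p.2))
      (∑' p : ℤ × ℤ, a p.1 * (starRingEnd ℂ) (a p.2) * gauss lam (x p.1 - x p.2)) :=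
    hFsum.hasSum
  set T : ℂ := ∑' p : ℤ × ℤ, a p.1 * (starRingEnd ℂ) (a p.2) * gauss lam (x p.1 - x p.2) with hTdef
  have hfiber : ∀ j : ℤ, HasSum (fun k => a j * (starRingEnd ℂ) (a k) * gauss lam (x j - x k))
      (a j * (starRingEnd ℂ) (f (x j))) := by
    intro j
    have h1 := (haSum j).star
    have hstarg : ∀ t : ℝ, star (gauss lam t) = gauss lam t := by
      intro t
      unfold gauss
      rw [← starRingEnd_apply]
      exact Complex.conj_ofReal _
    have h2 : HasSum (fun i => (starRingEnd ℂ) (a i) * gauss lam (x j - x i))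
        ((starRingEnd ℂ) (f (x j))) := by
      have hfun : ∀ i, star (a i * gauss lam (x j - x i))
          = (starRingEnd ℂ) (a i) * gauss lam (x j - x i) := by
        intro i
        rw [star_mul', hstarg, starRingEnd_apply]
      have h1' := h1
      simp only [hfun] at h1'
      rw [starRingEnd_apply]
      exact h1'
    have h3 := h2.mul_left (a j)
    have h4 : (fun i => a j * ((starRingEnd ℂ) (a i) * gauss lam (x j - x i)))
        = fun i => a j * (starRingEnd ℂ) (a i) * gauss lam (x j - x i) := by
      funext i; ring
    rw [h4] at h3
    exact h3
  have hHT2 : HasSum (fun j => a j * (starRingEnd ℂ) (f (x j))) T := hHT.prod_fiberwise hfiber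
  have hipT : (inner ℂ φL ΨL : ℂ) = ((2 * Real.pi : ℝ) : ℂ) * T := by
    have h5 := hHT2.mul_left (((2 * Real.pi : ℝ) : ℂ))
    have h6 : (fun j => ((2 * Real.pi : ℝ) : ℂ) * (a j * (starRingEnd ℂ) (f (x j))))
        = fun j => a j * (((2 * Real.pi : ℝ) : ℂ) * (starRingEnd ℂ) (f (x j))) := by
      funext j; ring
    rw [h6] at h5
    exact hHS1.unique h5
  -- pass to the limit in the key inequality
  have hprod : Tendsto (fun s : Finset ℤ => s ×ˢ s) atTop (atTop : Filter (Finset (ℤ × ℤ))) := by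
    apply tendsto_atTop_finset_of_monotone
    · intro s t hst
      exact Finset.product_subset_product hst hst
    · intro p
      exact ⟨{p.1, p.2}, Finset.mem_product.mpr ⟨by simp, by simp⟩⟩
  have hRtend : Tendsto (fun s : Finset ℤ => (((2 * Real.pi : ℝ) : ℂ) *
      ∑ p ∈ s ×ˢ s, a p.1 * (starRingEnd ℂ) (a p.2) * gauss lam (x p.1 - x p.2)).re) atTop
      (nhds ((((2 * Real.pi : ℝ) : ℂ) * T).re)) := by
    have h7 : Tendsto (fun t : Finset (ℤ × ℤ) =>
        ∑ p ∈ t, a p.1 * (starRingEnd ℂ) (a p.2) * gauss lam (x p.1 - x p.2)) atTop (nhds T) := hHT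
    have h8 := (h7.comp hprod).const_mul (((2 * Real.pi : ℝ) : ℂ))
    exact (Complex.continuous_re.tendsto _).comp h8
  have hnormtend : ∀ s : Finset ℤ,
      (eLpNorm (fun u => ∑ j ∈ s, a j * rbFun x j u) 2 μπ).toReal = ‖SL s‖ := by
    intro s
    rw [Lp.norm_def]
    congr 1
    exact (eLpNorm_congr_ae (Aux7.coeFn_sum_smul x a s)).symm
  have hLtend : Tendsto (fun s : Finset ℤ =>
      Real.sqrt (Real.pi / lam) * Real.exp (-((1/(4*lam)) * Real.pi^2)) *
        ((eLpNorm (fun u => ∑ j ∈ s, a j * rbFun x j u) 2 μπ).toReal)^2) atTop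
      (nhds (Real.sqrt (Real.pi / lam) * Real.exp (-((1/(4*lam)) * Real.pi^2)) * ‖ΨL‖^2)) := by
    have h8 : Tendsto (fun s : Finset ℤ => ‖SL s‖) atTop (nhds ‖ΨL‖) := htend.norm
    have h9 := (h8.pow 2).const_mul
      (Real.sqrt (Real.pi / lam) * Real.exp (-((1/(4*lam)) * Real.pi^2)))
    apply h9.congr
    intro s
    rw [hnormtend s]
  have hmain : Real.sqrt (Real.pi / lam) * Real.exp (-((1/(4*lam)) * Real.pi^2)) * ‖ΨL‖^2
      ≤ ((((2 * Real.pi : ℝ) : ℂ) * T).re) :=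
    le_of_tendsto_of_tendsto' hLtend hRtend (fun s => Aux7.key_ineq lam hlam x a s)
  -- Cauchy–Schwarz
  have hCS : ((((2 * Real.pi : ℝ) : ℂ) * T).re) ≤ ‖φL‖ * ‖ΨL‖ := by
    rw [← hipT]
    calc (inner ℂ φL ΨL : ℂ).re ≤ ‖(inner ℂ φL ΨL : ℂ)‖ := Complex.re_le_norm _
    _ ≤ ‖φL‖ * ‖ΨL‖ := norm_inner_le_norm φL ΨL
  -- arithmetic conclusion
  have hnΨ : (eLpNorm Ψ 2 μπ).toReal = ‖ΨL‖ := (Lp.norm_toLp Ψ hΨmem0).symm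
  have hnφ : (eLpNorm φ 2 μπ).toReal = ‖φL‖ := (Lp.norm_toLp φ hφmem).symm
  rw [hnΨ, hnφ]
  have hC0pos : 0 < Real.sqrt (Real.pi / lam) * Real.exp (-((1/(4*lam)) * Real.pi^2)) := by
    have : 0 < Real.sqrt (Real.pi / lam) := Real.sqrt_pos.mpr (by positivity)
    positivity
  have hKC0 : (Real.sqrt (lam / Real.pi) * Real.exp (Real.pi ^ 2 / (4 * lam))) *
      (Real.sqrt (Real.pi / lam) * Real.exp (-((1/(4*lam)) * Real.pi^2))) = 1 := by
    have e1 : Real.sqrt (lam / Real.pi) * Real.sqrt (Real.pi / lam) = 1 := by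
      rw [← Real.sqrt_mul (by positivity)]
      rw [show lam / Real.pi * (Real.pi / lam) = 1 from by field_simp]
      exact Real.sqrt_one
    have e2 : Real.exp (Real.pi ^ 2 / (4 * lam)) * Real.exp (-((1/(4*lam)) * Real.pi^2)) = 1 := by
      rw [← Real.exp_add, show Real.pi ^ 2 / (4 * lam) + -((1/(4*lam)) * Real.pi^2) = 0 from (by
        field_simp; ring), Real.exp_zero]
    calc (Real.sqrt (lam / Real.pi) * Real.exp (Real.pi ^ 2 / (4 * lam))) *
        (Real.sqrt (Real.pi / lam) * Real.exp (-((1/(4*lam)) * Real.pi^2)))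
        = (Real.sqrt (lam / Real.pi) * Real.sqrt (Real.pi / lam)) *
          (Real.exp (Real.pi ^ 2 / (4 * lam)) * Real.exp (-((1/(4*lam)) * Real.pi^2))) := by ring
    _ = 1 := by rw [e1, e2, one_mul]
  have hKpos : 0 < Real.sqrt (lam / Real.pi) * Real.exp (Real.pi ^ 2 / (4 * lam)) := by
    have : 0 < Real.sqrt (lam / Real.pi) := Real.sqrt_pos.mpr (by positivity)
    positivity
  rcases eq_or_lt_of_le (norm_nonneg ΨL) with h0 | h0
  · rw [← h0]
    positivity
  · have hstep : Real.sqrt (Real.pi / lam) * Real.exp (-((1/(4*lam)) * Real.pi^2)) * ‖ΨL‖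
        ≤ ‖φL‖ := by
      have hh := hmain.trans hCS
      nlinarith
    calc ‖ΨL‖ = (Real.sqrt (lam / Real.pi) * Real.exp (Real.pi ^ 2 / (4 * lam))) *
        (Real.sqrt (Real.pi / lam) * Real.exp (-((1/(4*lam)) * Real.pi^2)) * ‖ΨL‖) := by
          rw [← mul_assoc, hKC0, one_mul]
    _ ≤ (Real.sqrt (lam / Real.pi) * Real.exp (Real.pi ^ 2 / (4 * lam))) * ‖φL‖ :=
          mul_le_mul_of_nonneg_left hstep hKpos.le
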